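/- Let A be a C*-algebra, a ∈ A₊, C a unital C*-algebra, D a C*-algebra containing both A ⊗ C (or a copy where elements of A and C commute appropriately). Let φ be a bounded positive linear functional on the hereditary subalgebra generated by a inside D, and ω a character on C with φ(a ⊗ c) = φ(a)ω(c) for all c ∈ C. Then φ(c₁ b c₂) = ω(c₁) φ(b) ω(c₂) for all c₁, c₂ ∈ C and b in the hereditary subalgebra generated by a. -/

import Mathlib

open scoped ComplexOrder

private lemma cs_lin (K γ : ℂ) (h : ∀ t : ℝ, 0 ≤ K + (t : ℂ) * γ) : γ = 0 := by
  have him : ∀ t : ℝ, 0 = K.im + t * γ.im := by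
    intro t
    have := (Complex.nonneg_iff.mp (h t)).2
    simpa [Complex.add_im, Complex.mul_im] using this
  have hre : ∀ t : ℝ, 0 ≤ K.re + t * γ.re := by
    intro t
    have := (Complex.nonneg_iff.mp (h t)).1
    simpa [Complex.add_re, Complex.mul_re] using this
  have hgre : γ.re = 0 := by
    by_contra hg
    have := hre (-(K.re + 1) / γ.re)
    rw [div_mul_cancel₀ _ hg] at this
    linarith
  have h0 := him 0
  have h1 := him 1
  have hgim : γ.im = 0 := by linarith
  exact Complex.ext hgre hgim

private lemma cs_aux (K α β : ℂ)
    (h : ∀ z : ℂ, 0 ≤ K + z * α + (starRingEnd ℂ) z * β) : α = 0 ∧ β = 0 := by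
  have h1 : α + β = 0 := by
    apply cs_lin K
    intro t
    have e : K + (t : ℂ) * (α + β) = K + (t : ℂ) * α + (starRingEnd ℂ) (t : ℂ) * β := by
      rw [Complex.conj_ofReal]; ring
    rw [e]; exact h t
  have h2 : α - β = 0 := by
    have h2' : Complex.I * (α - β) = 0 := by
      apply cs_lin K
      intro t
      have e : K + (t : ℂ) * (Complex.I * (α - β))
          = K + ((t : ℂ) * Complex.I) * α + (starRingEnd ℂ) ((t : ℂ) * Complex.I) * β := by
        rw [map_mul, Complex.conj_ofReal, Complex.conj_I]; ring
      rw [e]; exact h _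
    rcases mul_eq_zero.mp h2' with h' | h'
    · exact absurd h' Complex.I_ne_zero
    · exact h'
  exact ⟨by linear_combination (h1 + h2) / 2, by linear_combination (h1 - h2) / 2⟩

private lemma cfcnHom_mem {E : Type*} [CStarAlgebra E] (D : NonUnitalStarSubalgebra ℝ E)
    (hD : IsClosed (D : Set E)) {a : E} (ha : IsSelfAdjoint a) (haD : a ∈ D)
    (f : ContinuousMapZero (quasispectrum ℝ a) ℝ) : cfcₙHom ha f ∈ D := by
  have h₁ := (cfcₙHom_isClosedEmbedding ha).continuous.range_subset_closure_image_dense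
    (ContinuousMapZero.adjoin_id_dense (quasispectrum ℝ a)) ⟨f, rfl⟩
  rw [← SetLike.mem_coe]
  refine closure_minimal ?_ hD h₁
  rw [← NonUnitalStarSubalgebra.coe_map, SetLike.coe_subset_coe,
    NonUnitalStarSubalgebra.map_le]
  apply NonUnitalStarAlgebra.adjoin_le
  rw [Set.singleton_subset_iff, SetLike.mem_coe, NonUnitalStarSubalgebra.mem_comap]
  show cfcₙHom ha (ContinuousMapZero.id (quasispectrum ℝ a)) ∈ D
  rw [cfcₙHom_id ha]
  exact haD

/-- restriction of scalars to `ℝ` for a complex non-unital star subalgebra -/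
private def realD {E : Type*} [CStarAlgebra E] (D : NonUnitalStarSubalgebra ℂ E) :
    NonUnitalStarSubalgebra ℝ E where
  carrier := D
  add_mem' hx hy := D.add_mem hx hy
  zero_mem' := D.zero_mem
  mul_mem' hx hy := D.mul_mem hx hy
  smul_mem' r x hx := by
    rw [← algebraMap_smul ℂ r x]
    exact SMulMemClass.smul_mem _ hx
  star_mem' hx := star_mem (s := D) hx

private lemma cfcn_mem {E : Type*} [CStarAlgebra E] (D : NonUnitalStarSubalgebra ℂ E)
    (hD : IsClosed (D : Set E)) {a : E} (ha : IsSelfAdjoint a) (haD : a ∈ D)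
    (g : ℝ → ℝ) (hg : Continuous g) (hg0 : g 0 = 0) : cfcₙ g a ∈ D := by
  rw [cfcₙ_apply g a (hg.continuousOn) hg0 ha]
  exact cfcnHom_mem (realD D) hD ha haD _

private lemma mem_her {E : Type*} [CStarAlgebra E] [PartialOrder E] [StarOrderedRing E]
    (D : NonUnitalStarSubalgebra ℂ E) (hD : IsClosed (D : Set E)) {a : E} (haD : a ∈ D)
    (ha : 0 ≤ a) : a ∈ closure {x : E | ∃ d ∈ D, x = a * d * a} := by
  have hsa : IsSelfAdjoint a := .of_nonneg ha
  rw [Metric.mem_closure_iff]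
  intro ε hε
  set δ : ℝ := ε / 2 with hδdef
  have hδ : 0 < δ := by positivity
  set g : ℝ → ℝ := fun t => t / (max t δ) ^ 2 with hgdef
  have hgc : Continuous g := by
    apply continuous_id.div ((continuous_id.max continuous_const).pow 2)
    intro t
    exact ne_of_gt (pow_pos (lt_max_of_lt_right hδ) 2)
  have hg0 : g 0 = 0 := by simp [hgdef]
  set e : E := cfcₙ g a with hedef
  have heD : e ∈ D := cfcn_mem D hD hsa haD g hgc hg0
  have hecfc : e = cfc g a := cfcₙ_eq_cfc (hgc.continuousOn) hg0
  have h2 : cfc (fun t : ℝ => g t * t) a = e * a := by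
    rw [cfc_mul _ _ a (hgc.continuousOn) (continuous_id'.continuousOn), hecfc, cfc_id' ℝ a]
  have h3 : cfc (fun t : ℝ => t * (g t * t)) a = a * (e * a) := by
    rw [cfc_mul (fun t : ℝ => t) (fun t : ℝ => g t * t) a (continuous_id'.continuousOn)
      ((hgc.mul continuous_id').continuousOn), h2, cfc_id' ℝ a]
  have h4 : cfc (fun t : ℝ => t - t * (g t * t)) a = a - a * (e * a) := by
    rw [cfc_sub (fun t : ℝ => t) (fun t : ℝ => t * (g t * t)) a (continuous_id'.continuousOn)
      ((continuous_id'.mul (hgc.mul continuous_id')).continuousOn), h3, cfc_id' ℝ a]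
  have hbound : ‖a - a * (e * a)‖ ≤ δ := by
    rw [← h4]
    apply norm_cfc_le hδ.le
    intro t ht
    have ht0 : 0 ≤ t := spectrum_nonneg_of_nonneg ha ht
    rw [Real.norm_eq_abs, abs_le]
    rcases le_total t δ with h | h
    · rw [hgdef]
      simp only []
      rw [max_eq_right h]
      have hδ2 : 0 < δ ^ 2 := pow_pos hδ 2
      have e1 : t * (t / δ ^ 2 * t) = t ^ 2 * t / δ ^ 2 := by ring
      have e2 : t ^ 2 * t / δ ^ 2 ≤ t := by
        rw [div_le_iff₀ hδ2]
        nlinarith [mul_nonneg ht0 (mul_nonneg (sub_nonneg.mpr h) (by linarith : (0:ℝ) ≤ δ + t))]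
      have e3 : 0 ≤ t ^ 2 * t / δ ^ 2 := by positivity
      constructor <;> [linarith; linarith]
    · have htpos : 0 < t := lt_of_lt_of_le hδ h
      have : g t = 1 / t := by
        rw [hgdef]; simp only []
        rw [max_eq_left h, pow_two, div_mul_eq_div_div, div_self (ne_of_gt htpos)]
      rw [this]
      rw [one_div, inv_mul_cancel₀ (ne_of_gt htpos), mul_one, sub_self]
      constructor <;> linarith
  refine ⟨a * (e * a), ⟨e, heD, by rw [mul_assoc]⟩, ?_⟩
  rw [dist_eq_norm]
  calc ‖a - a * (e * a)‖ ≤ δ := hbound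
    _ < ε := by rw [hδdef]; linarith

/-- Non-unital multiplicative domain argument.  Let `D` be a C*-algebra (realized as a closed
non-unital star subalgebra of a unital C*-algebra `E`, playing the role of `(A ⊗ C) ⋊_r Γ`),
`a ∈ D` positive, and `C` a unital C*-algebra mapped into the multipliers of `D` by a unital
*-homomorphism `ρ` whose image commutes with `a`.  Let `φ` be a bounded linear functional
which is positive on `Her(a, D) = closure (a D a)`, and `ω` a character on `C` with
`φ (a ρ(c)) = φ(a) ω(c)` for all `c`.  Then `φ (ρ(c₁) b ρ(c₂)) = ω(c₁) φ(b) ω(c₂)` for all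
`c₁, c₂ ∈ C` and all `b ∈ Her(a, D)`. -/
theorem stmt6 {E C : Type*} [CStarAlgebra E] [PartialOrder E] [StarOrderedRing E]
    [CStarAlgebra C]
    (D : NonUnitalStarSubalgebra ℂ E) (hD_closed : IsClosed (D : Set E))
    (a : E) (haD : a ∈ D) (ha : 0 ≤ a)
    (ρ : C →⋆ₐ[ℂ] E)
    (hρ_mult : ∀ (c : C), ∀ d ∈ D, ρ c * d ∈ D ∧ d * ρ c ∈ D)
    (hρ_comm : ∀ c : C, Commute a (ρ c))
    (φ : E →L[ℂ] ℂ)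
    (hφ_pos : ∀ x ∈ closure {x : E | ∃ d ∈ D, x = a * d * a}, 0 ≤ x → 0 ≤ φ x)
    (ω : C →⋆ₐ[ℂ] ℂ)
    (hω : ∀ c : C, φ (a * ρ c) = φ a * ω c) :
    ∀ (c₁ c₂ : C), ∀ b ∈ closure {x : E | ∃ d ∈ D, x = a * d * a},
      φ (ρ c₁ * b * ρ c₂) = ω c₁ * φ b * ω c₂ := by
  intro c₁ c₂ b hb
  set S : Set E := {x : E | ∃ d ∈ D, x = a * d * a} with hS
  have hsa : IsSelfAdjoint a := .of_nonneg ha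
  have hca : ∀ c : C, a * ρ c = ρ c * a := fun c => (hρ_comm c).eq
  -- commutation juggling lemmas
  have hjugL : ∀ (c : C) (d : E), ρ c * (a * d * a) = a * (ρ c * d) * a := by
    intro c d
    simp only [← mul_assoc]
    rw [← hca c]
  have hjugR : ∀ (c : C) (d : E), a * d * a * ρ c = a * (d * ρ c) * a := by
    intro c d
    rw [mul_assoc (a * d) a (ρ c), hca c, ← mul_assoc (a * d) (ρ c) a, mul_assoc a d (ρ c)]
  -- `closure S` is a submodule
  let flin : E →ₗ[ℂ] E := (LinearMap.mulLeft ℂ a).comp (LinearMap.mulRight ℂ a)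
  let P : Submodule ℂ E := Submodule.map flin D.toNonUnitalSubalgebra.toSubmodule
  have hSP : S = (P : Set E) := by
    ext x
    constructor
    · rintro ⟨d, hd, rfl⟩
      exact ⟨d, hd, by simp [flin, mul_assoc]⟩
    · rintro ⟨d, hd, rfl⟩
      exact ⟨d, hd, by simp [flin, mul_assoc]⟩
  have hMP : closure S = (P.topologicalClosure : Set E) := by
    rw [hSP]
    exact (Submodule.topologicalClosure_coe P).symm
  have hadd : ∀ x ∈ closure S, ∀ y ∈ closure S, x + y ∈ closure S := by
    intro x hx y hy
    rw [hMP] at hx hy ⊢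
    exact P.topologicalClosure.add_mem hx hy
  have hsmul : ∀ (z : ℂ), ∀ x ∈ closure S, z • x ∈ closure S := by
    intro z x hx
    rw [hMP] at hx ⊢
    exact P.topologicalClosure.smul_mem z hx
  have hSmem : ∀ d ∈ D, a * d * a ∈ closure S := fun d hd => subset_closure ⟨d, hd, rfl⟩
  -- left and right multiplication by `ρ c` preserves `closure S`
  have hLmul : ∀ (c : C), ∀ m ∈ closure S, ρ c * m ∈ closure S := by
    intro c m hm
    have hmaps : Set.MapsTo (fun x => ρ c * x) S S := by
      rintro x ⟨d, hd, rfl⟩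
      exact ⟨ρ c * d, (hρ_mult c d hd).1, hjugL c d⟩
    exact hmaps.closure (continuous_mul_left _) hm
  have hRmul : ∀ (c : C), ∀ m ∈ closure S, m * ρ c ∈ closure S := by
    intro c m hm
    have hmaps : Set.MapsTo (fun x => x * ρ c) S S := by
      rintro x ⟨d, hd, rfl⟩
      exact ⟨d * ρ c, (hρ_mult c d hd).2, hjugR c d⟩
    exact hmaps.closure (continuous_mul_right _) hm
  have haM : a ∈ closure S := mem_her D hD_closed haD ha
  -- the square root of `a`
  set r : E := CFC.sqrt a with hrdef
  have hr2 : r * r = a := CFC.sqrt_mul_sqrt_self a ha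
  have hrstar : star r = r := (IsSelfAdjoint.of_nonneg (CFC.sqrt_nonneg a)).star_eq
  have hr2' : ∀ z : E, r * (r * z) = a * z := fun z => by rw [← mul_assoc, hr2]
  -- the key Cauchy–Schwarz step
  have key : ∀ c : C, ω c = 0 → ∀ d ∈ D,
      φ (ρ c * (a * d * a)) = 0 ∧ φ (a * (star d * ρ (star c)) * a) = 0 := by
    intro c hc d hd
    set x : E := r * d * a with hx
    set y : E := r * ρ (star c) with hy
    have hxstar : star x = a * (star d * r) := by
      rw [hx, star_mul, star_mul, hrstar, hsa.star_eq]
    have hystar : star y = ρ c * r := by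
      rw [hy, star_mul, hrstar, ← map_star ρ, star_star]
    have hxx : star x * x = a * (star d * a * d) * a := by
      rw [hxstar, hx]
      simp only [mul_assoc]
      rw [hr2']
    have hxy : star x * y = a * (star d * ρ (star c)) * a := by
      rw [hxstar, hy]
      simp only [mul_assoc]
      rw [hr2', hca (star c)]
    have hyx : star y * x = ρ c * (a * d * a) := by
      rw [hystar, hx]
      simp only [mul_assoc]
      rw [hr2']
    have hyy : star y * y = a * ρ (c * star c) := by
      rw [hystar, hy]
      simp only [mul_assoc]
      rw [hr2', map_mul, ← mul_assoc, ← hca c, mul_assoc]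
    have hxxM : star x * x ∈ closure S := by
      rw [hxx]
      exact hSmem _ (D.mul_mem (D.mul_mem (star_mem (s := D) hd) haD) hd)
    have hxyM : star x * y ∈ closure S := by
      rw [hxy]
      exact hSmem _ (hρ_mult (star c) (star d) (star_mem (s := D) hd)).2
    have hyxM : star y * x ∈ closure S := by
      rw [hyx, hjugL c d]
      exact hSmem _ (hρ_mult c d hd).1
    have hyyM : star y * y ∈ closure S := by
      rw [hyy]
      exact hRmul _ _ haM
    have hyyφ : φ (star y * y) = 0 := by
      rw [hyy, hω (c * star c), map_mul, hc, zero_mul, mul_zero]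
    have hCS : ∀ z : ℂ,
        0 ≤ φ (star x * x) + z * φ (star x * y) + (starRingEnd ℂ) z * φ (star y * x) := by
      intro z
      have hexp : star (x + z • y) * (x + z • y)
          = star x * x + z • (star x * y) + (starRingEnd ℂ) z • (star y * x)
            + (z * (starRingEnd ℂ) z) • (star y * y) := by
        simp only [star_add, star_smul, add_mul, mul_add, smul_add, smul_mul_assoc,
          mul_smul_comm, smul_smul, RCLike.star_def]
        abel
      have hzmem : star (x + z • y) * (x + z • y) ∈ closure S := by
        rw [hexp]
        exact hadd _ (hadd _ (hadd _ hxxM _ (hsmul _ _ hxyM)) _ (hsmul _ _ hyxM)) _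
          (hsmul _ _ hyyM)
      have hpos := hφ_pos _ hzmem (star_mul_self_nonneg _)
      rw [hexp] at hpos
      simp only [map_add, map_smul, smul_eq_mul] at hpos
      rw [hyyφ, mul_zero, add_zero] at hpos
      exact hpos
    obtain ⟨hα, hβ⟩ := cs_aux _ _ _ hCS
    exact ⟨by rw [← hyx]; exact hβ, by rw [← hxy]; exact hα⟩
  -- the left multiplicative-domain property
  have hωker : ∀ c : C, ω (c - ω c • 1) = 0 := by
    intro c
    rw [map_sub, map_smul, map_one, smul_eq_mul, mul_one, sub_self]
  have hρdec : ∀ c : C, ρ c = ρ (c - ω c • 1) + ω c • 1 := by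
    intro c
    rw [map_sub, map_smul, map_one, sub_add_cancel]
  have hleft : ∀ (c : C), ∀ m ∈ closure S, φ (ρ c * m) = ω c * φ m := by
    intro c m hm
    have heq : Set.EqOn (fun m => φ (ρ c * m)) (fun m => ω c * φ m) S := by
      rintro x ⟨d, hd, rfl⟩
      have h0 := (key _ (hωker c) d hd).1
      show φ (ρ c * (a * d * a)) = ω c * φ (a * d * a)
      rw [hρdec c, add_mul, smul_mul_assoc, one_mul, map_add, map_smul, h0, zero_add,
        smul_eq_mul]
    exact heq.closure (φ.continuous.comp (continuous_mul_left _))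
      (continuous_const.mul φ.continuous) hm
  have hright : ∀ (c : C), ∀ m ∈ closure S, φ (m * ρ c) = φ m * ω c := by
    intro c m hm
    have heq : Set.EqOn (fun m => φ (m * ρ c)) (fun m => φ m * ω c) S := by
      rintro x ⟨d, hd, rfl⟩
      have hc' : ω (star (c - ω c • 1)) = 0 := by
        rw [map_star, hωker c, star_zero]
      have h0 := (key _ hc' (star d) (star_mem (s := D) hd)).2
      rw [star_star, star_star] at h0
      show φ (a * d * a * ρ c) = φ (a * d * a) * ω c
      rw [hρdec c, mul_add, mul_smul_comm, mul_one, map_add, map_smul, hjugR _ d, h0,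
        zero_add, smul_eq_mul, mul_comm]
    exact heq.closure (φ.continuous.comp (continuous_mul_right _))
      (φ.continuous.mul continuous_const) hm
  have hbρ : b * ρ c₂ ∈ closure S := hRmul c₂ b hb
  calc φ (ρ c₁ * b * ρ c₂) = φ (ρ c₁ * (b * ρ c₂)) := by rw [mul_assoc]
    _ = ω c₁ * φ (b * ρ c₂) := hleft c₁ _ hbρ
    _ = ω c₁ * (φ b * ω c₂) := by rw [hright c₂ b hb]
    _ = ω c₁ * φ b * ω c₂ := by ring
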